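/- Let 0 < p ≤ 1, let b be a weight on (0,∞) with 0 < B(t) = ∫₀ᵗ b < ∞ for all t > 0, and let f : (0,∞) → [0,∞) be non-increasing. Then there is a constant C depending only on p such that for all t > 0, ∫₀ᵗ f(y)b(y) dy ≤ C (∫₀ᵗ f(y)^p B(y)^{p-1} b(y) dy)^{1/p}. -/

import Mathlib

open MeasureTheory Set
open scoped ENNReal

private lemma ennreal_rpow_anti {x y : ℝ≥0∞} {z : ℝ} (hxy : x ≤ y) (hz : z ≤ 0) :
    y ^ z ≤ x ^ z := by
  have hx : x ^ z = (x ^ (-z))⁻¹ := by rw [← ENNReal.rpow_neg, neg_neg]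
  have hy : y ^ z = (y ^ (-z))⁻¹ := by rw [← ENNReal.rpow_neg, neg_neg]
  rw [hx, hy]
  exact ENNReal.inv_le_inv.2 (ENNReal.rpow_le_rpow hxy (neg_nonneg.2 hz))

private lemma tsum_rpow_le {p : ℝ} (hp0 : 0 < p) (hp1 : p ≤ 1) (a : ℕ → ℝ≥0∞) :
    (∑' i, a i) ^ p ≤ ∑' i, a i ^ p := by
  have hfin : ∀ s : Finset ℕ, (∑ i ∈ s, a i) ^ p ≤ ∑ i ∈ s, a i ^ p := by
    intro s
    induction s using Finset.induction with
    | empty => simp [ENNReal.zero_rpow_of_pos hp0]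
    | @insert i s hi ih =>
      rw [Finset.sum_insert hi, Finset.sum_insert hi]
      exact le_trans (ENNReal.rpow_add_le_add_rpow _ _ hp0.le hp1) (by gcongr)
  rw [ENNReal.tsum_eq_iSup_sum]
  rw [Monotone.map_iSup_of_continuousAt
    (ENNReal.continuous_rpow_const.continuousAt)
    (fun _ _ h => ENNReal.rpow_le_rpow h hp0.le)
    (by simpa using ENNReal.zero_rpow_of_pos hp0)]
  exact iSup_le fun s => (hfin s).trans (ENNReal.sum_le_tsum s) -- fix name

private lemma contB (b : ℝ → ℝ≥0∞) (hb : Measurable b)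
    (hfin : ∀ y : ℝ, (volume.withDensity b) (Ioc 0 y) ≠ ∞) :
    Continuous fun y : ℝ => (volume.withDensity b) (Ioc 0 y) := by
  set μ := volume.withDensity b with hμ
  have hmono : Monotone fun y : ℝ => μ (Ioc 0 y) := fun x y hxy =>
    measure_mono (Ioc_subset_Ioc_right hxy)
  rw [continuous_iff_continuousAt]
  intro y₀
  rw [ContinuousAt, tendsto_order]
  constructor
  · intro c hc
    have hsing : μ {y₀} = 0 := by
      rw [hμ, withDensity_apply _ (measurableSet_singleton _),
        Measure.restrict_eq_zero.2 (measure_singleton _), lintegral_zero_measure]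
    have hIoo : c < μ (Ioo 0 y₀) := by
      refine lt_of_lt_of_le hc ?_
      calc μ (Ioc 0 y₀) ≤ μ (Ioo 0 y₀ ∪ {y₀}) := measure_mono (fun x hx => by
            rcases lt_or_eq_of_le hx.2 with h | h
            · exact Or.inl ⟨hx.1, h⟩
            · exact Or.inr h)
        _ ≤ μ (Ioo 0 y₀) + μ {y₀} := measure_union_le _ _
        _ = μ (Ioo 0 y₀) := by rw [hsing, add_zero]
    have hU : Ioo 0 y₀ = ⋃ n : ℕ, Ioc 0 (y₀ - 1 / (n + 1)) := by
      ext x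
      simp only [mem_Ioo, mem_iUnion, mem_Ioc]
      constructor
      · rintro ⟨hx0, hxy⟩
        obtain ⟨n, hn⟩ := exists_nat_one_div_lt (sub_pos.2 hxy)
        exact ⟨n, hx0, by push_cast at hn ⊢; linarith⟩
      · rintro ⟨n, hx0, hxn⟩
        have h1 : (0 : ℝ) < 1 / ((n : ℝ) + 1) := by positivity
        exact ⟨hx0, by linarith⟩
    have hmonoset : Monotone fun n : ℕ => Ioc (0:ℝ) (y₀ - 1 / (n + 1)) := by
      intro m n hmn
      apply Ioc_subset_Ioc_right
      have h1 : (1:ℝ) / ((n:ℝ)+1) ≤ 1 / ((m:ℝ)+1) :=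
        one_div_le_one_div_of_le (by positivity)
          (by exact_mod_cast add_le_add_left (Nat.cast_le.2 hmn) 1)
      linarith
    rw [hU, hmonoset.measure_iUnion] at hIoo
    obtain ⟨n, hn⟩ := lt_iSup_iff.1 hIoo
    have hlt : y₀ - 1 / ((n : ℝ) + 1) < y₀ := by
      have h1 : (0:ℝ) < 1 / ((n:ℝ)+1) := by positivity
      linarith
    filter_upwards [Ioi_mem_nhds hlt] with y hy
    exact hn.trans_le (hmono hy.le)
  · intro c hc
    have hI : Ioc 0 y₀ = ⋂ n : ℕ, Ioc 0 (y₀ + 1 / (n + 1)) := by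
      ext x
      simp only [mem_Ioc, mem_iInter]
      constructor
      · rintro ⟨hx0, hxy⟩ n
        have h1 : (0:ℝ) < 1 / ((n:ℝ)+1) := by positivity
        exact ⟨hx0, by linarith⟩
      · intro h
        refine ⟨(h 0).1, ?_⟩
        by_contra hlt
        push_neg at hlt
        obtain ⟨n, hn⟩ := exists_nat_one_div_lt (sub_pos.2 hlt)
        have h2 := (h n).2
        push_cast at hn
        linarith
    have hanti : Antitone fun n : ℕ => Ioc (0:ℝ) (y₀ + 1 / (n + 1)) := by
      intro m n hmn
      apply Ioc_subset_Ioc_right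
      have h1 : (1:ℝ) / ((n:ℝ)+1) ≤ 1 / ((m:ℝ)+1) :=
        one_div_le_one_div_of_le (by positivity)
          (by exact_mod_cast add_le_add_left (Nat.cast_le.2 hmn) 1)
      linarith
    rw [hI, hanti.measure_iInter (fun n => measurableSet_Ioc.nullMeasurableSet)
      ⟨0, hfin _⟩] at hc
    obtain ⟨n, hn⟩ := iInf_lt_iff.1 hc
    have hlt : y₀ < y₀ + 1 / ((n : ℝ) + 1) := by
      have h1 : (0:ℝ) < 1 / ((n:ℝ)+1) := by positivity
      linarith
    filter_upwards [Iio_mem_nhds hlt] with y hy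
    exact (hmono hy.le).trans_lt hn

/-- For `0 < p ≤ 1`, a weight `b` with `0 < B(t) < ∞`, and non-increasing
`f ≥ 0`, there is `C` depending only on `p` with
`∫₀ᵗ f b ≤ C (∫₀ᵗ f^p B^{p-1} b)^{1/p}` for all `t > 0`. -/
theorem stmt_1 (p : ℝ) (hp0 : 0 < p) (hp1 : p ≤ 1)
    (b f : ℝ → ℝ≥0∞) (hb : Measurable b) (hf : Measurable f)
    (hB : ∀ t : ℝ, 0 < t →
      0 < (∫⁻ y in Ioc 0 t, b y) ∧ (∫⁻ y in Ioc 0 t, b y) < ⊤)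
    (hmono : AntitoneOn f (Ioi (0 : ℝ))) :
    ∃ C : ℝ≥0∞, 0 < C ∧ C < ⊤ ∧
      ∀ t : ℝ, 0 < t →
        (∫⁻ y in Ioc 0 t, f y * b y)
          ≤ C * (∫⁻ y in Ioc 0 t,
              (f y) ^ p * (∫⁻ s in Ioc 0 y, b s) ^ (p - 1) * b y) ^ (1 / p) := by
  classical
  have h2 : (2 : ℝ≥0∞) ≠ 0 := by norm_num
  have h2T : (2 : ℝ≥0∞) ≠ ∞ := by norm_num
  refine ⟨2 * (2 : ℝ≥0∞) ^ (1 / p), ?_, ?_, ?_⟩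
  · exact ENNReal.mul_pos h2 (ENNReal.rpow_pos (by norm_num) h2T).ne'
  · exact ENNReal.mul_lt_top (by norm_num) (ENNReal.rpow_lt_top_of_nonneg (by positivity) h2T)
  intro t ht
  set μ := volume.withDensity b with hμdef
  have hBμ : ∀ y : ℝ, (∫⁻ s in Ioc 0 y, b s) = μ (Ioc 0 y) := fun y =>
    (withDensity_apply b measurableSet_Ioc).symm
  have hfin : ∀ y : ℝ, μ (Ioc 0 y) ≠ ∞ := by
    intro y
    rcases le_or_gt y 0 with h | h
    · rw [Ioc_eq_empty (not_lt.2 h)]; simp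
    · rw [← hBμ]; exact (hB y h).2.ne
  have hBcont := contB b hb hfin
  have hBmono : Monotone fun y : ℝ => μ (Ioc 0 y) := fun x y hxy =>
    measure_mono (Ioc_subset_Ioc_right hxy)
  have hBmeas : Measurable fun y : ℝ => μ (Ioc 0 y) := hBcont.measurable
  have hmeas2 : Measurable fun y : ℝ => f y ^ p * (μ (Ioc 0 y)) ^ (p - 1) :=
    (ENNReal.continuous_rpow_const.measurable.comp hf).mul
      (ENNReal.continuous_rpow_const.measurable.comp hBmeas)
  set Bt := μ (Ioc 0 t) with hBt
  have hBt0 : Bt ≠ 0 := by rw [hBt, ← hBμ]; exact (hB t ht).1.ne'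
  have hBtT : Bt ≠ ∞ := hfin t
  set c : ℕ → ℝ≥0∞ := fun k => Bt * (2⁻¹ : ℝ≥0∞) ^ k with hcdef
  have hc0 : ∀ k, c k ≠ 0 := fun k =>
    mul_ne_zero hBt0 (pow_ne_zero _ (ENNReal.inv_ne_zero.2 h2T))
  have hcT : ∀ k, c k ≠ ∞ := fun k =>
    ENNReal.mul_ne_top hBtT (ENNReal.pow_ne_top (ENNReal.inv_ne_top.2 h2))
  have hcsucc : ∀ k, c (k + 1) = c k * 2⁻¹ := fun k => by
    simp only [hcdef, pow_succ, mul_assoc]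
  have hck : ∀ k, c k = 2 * c (k + 1) := by
    intro k
    rw [hcsucc k, mul_comm (2 : ℝ≥0∞) _, mul_assoc, ENNReal.inv_mul_cancel h2 h2T, mul_one]
  have hcle : ∀ k, c k ≤ Bt := by
    intro k
    calc Bt * (2⁻¹ : ℝ≥0∞) ^ k ≤ Bt * 1 := by
          gcongr
          exact pow_le_one' (ENNReal.inv_le_one.2 one_le_two) k
      _ = Bt := mul_one _
  -- choose the dyadic points
  have hIVT : ∀ k : ℕ, ∃ x ∈ Icc 0 t, μ (Ioc 0 x) = c k := by
    intro k
    have h0 : μ (Ioc 0 (0:ℝ)) = 0 := by simp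
    have hmem : c k ∈ Icc (μ (Ioc 0 (0:ℝ))) (μ (Ioc 0 t)) := by
      rw [h0]; exact ⟨zero_le, hcle k⟩
    obtain ⟨x, hx1, hx2⟩ := intermediate_value_Icc ht.le hBcont.continuousOn hmem
    exact ⟨x, hx1, hx2⟩
  choose T hT1 hT2 using hIVT
  set τ : ℕ → ℝ := fun k => if k = 0 then t else T k with hτdef
  have hτmem : ∀ k, τ k ∈ Icc 0 t := by
    intro k
    simp only [hτdef]
    split
    · exact ⟨ht.le, le_refl t⟩
    · exact hT1 k
  have hτB : ∀ k, μ (Ioc 0 (τ k)) = c k := by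
    intro k
    rcases eq_or_ne k 0 with h | h
    · subst h
      simp only [hτdef, if_pos rfl, hcdef, pow_zero, mul_one]
      exact hBt.symm
    · simp only [hτdef, if_neg h]
      exact hT2 k
  have hτpos : ∀ k, 0 < τ k := by
    intro k
    by_contra h
    push_neg at h
    have h0 : μ (Ioc 0 (τ k)) = 0 := by rw [Ioc_eq_empty (not_lt.2 h)]; simp
    exact hc0 k (by rw [← hτB k, h0])
  have hτanti : Antitone τ := by
    apply antitone_nat_of_succ_le
    intro k
    by_contra h
    push_neg at h
    have h1 : c k ≤ c (k + 1) := by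
      rw [← hτB k, ← hτB (k+1)]; exact hBmono h.le
    have h2' : c (k + 1) < c k := by
      rw [hcsucc k, ← div_eq_mul_inv]
      exact ENNReal.half_lt_self (hc0 k) (hcT k)
    exact absurd h1 (not_le.2 h2')
  set L := ⨅ k, τ k with hLdef
  have hbdd : BddBelow (range τ) := ⟨0, by rintro _ ⟨k, rfl⟩; exact (hτmem k).1⟩
  have hLle : ∀ k, L ≤ τ k := fun k => ciInf_le hbdd k
  have hLnull : μ (Ioc 0 L) = 0 := by
    have hle : ∀ k, μ (Ioc 0 L) ≤ c k := fun k => by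
      rw [← hτB k]; exact hBmono (hLle k)
    have htend : Filter.Tendsto c Filter.atTop (nhds 0) := by
      have h3 : Filter.Tendsto (fun k : ℕ => Bt * (2⁻¹ : ℝ≥0∞) ^ k) Filter.atTop
          (nhds (Bt * 0)) :=
        ENNReal.Tendsto.const_mul (ENNReal.tendsto_pow_atTop_nhds_zero_of_lt_one
          (by norm_num : (2⁻¹ : ℝ≥0∞) < 1)) (Or.inr hBtT)
      rw [mul_zero] at h3
      exact h3
    exact le_antisymm (ge_of_tendsto' htend hle) zero_le
  have hcover : Ioc 0 t ⊆ Ioc 0 L ∪ ⋃ k, Ioc (τ (k+1)) (τ k) := by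
    rintro x ⟨hx0, hxt⟩
    rcases le_or_gt x L with h | h
    · exact Or.inl ⟨hx0, h⟩
    · right
      have hex : ∃ k, τ k < x := by
        by_contra hno
        push_neg at hno
        exact absurd (le_ciInf hno) (not_le.2 h)
      have hk : τ (Nat.find hex) < x := Nat.find_spec hex
      have hkne : Nat.find hex ≠ 0 := by
        intro h0
        rw [h0] at hk
        simp only [hτdef, if_pos rfl] at hk
        exact absurd hxt (not_le.2 hk)
      obtain ⟨m, hm⟩ := Nat.exists_eq_succ_of_ne_zero hkne
      have hmlt : ¬ τ m < x := Nat.find_min hex (by omega)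
      have hk' : τ (m + 1) < x := by rw [hm] at hk; exact hk
      exact mem_iUnion.2 ⟨m, hk', not_lt.1 hmlt⟩
  have hdisj : Pairwise (Function.onFun Disjoint fun k => Ioc (τ (k+1)) (τ k)) := by
    rw [pairwise_disjoint_on]
    intro m n hmn
    refine Set.disjoint_left.2 fun x hx1 hx2 => ?_
    have h3 : τ n ≤ τ (m + 1) := hτanti (Nat.succ_le_of_lt hmn)
    exact absurd (hx2.2.trans h3) (not_le.2 hx1.1)
  have hμIoc : ∀ k, μ (Ioc (τ (k+1)) (τ k)) = c (k+1) := by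
    intro k
    have hun : Ioc 0 (τ (k+1)) ∪ Ioc (τ (k+1)) (τ k) = Ioc 0 (τ k) :=
      Ioc_union_Ioc_eq_Ioc (hτpos (k+1)).le (hτanti (Nat.le_succ k))
    have hdis : Disjoint (Ioc (0:ℝ) (τ (k+1))) (Ioc (τ (k+1)) (τ k)) :=
      Set.disjoint_left.2 fun x hx1 hx2 => absurd hx1.2 (not_le.2 hx2.1)
    have hmu := measure_union (μ := μ) hdis measurableSet_Ioc
    rw [hun, hτB, hτB] at hmu
    have hsum : c (k+1) + c (k+1) = c k := by
      rw [hck k, two_mul]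
    rw [← hsum] at hmu
    exact ((ENNReal.add_right_inj (hcT (k+1))).1 hmu).symm
  have hconv : ∀ (g : ℝ → ℝ≥0∞), Measurable g → ∀ S : Set ℝ, MeasurableSet S →
      ∫⁻ y in S, g y * b y = ∫⁻ y in S, g y ∂μ := by
    intro g hg S hS
    calc ∫⁻ y in S, g y * b y = ∫⁻ y in S, (b * g) y := lintegral_congr fun y => mul_comm _ _
      _ = ∫⁻ y, g y ∂((volume.restrict S).withDensity b) :=
          (lintegral_withDensity_eq_lintegral_mul _ hb hg).symm
      _ = ∫⁻ y in S, g y ∂μ := by rw [restrict_withDensity hS]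
  have hLHS : (∫⁻ y in Ioc 0 t, f y * b y) = ∫⁻ y in Ioc 0 t, f y ∂μ :=
    hconv f hf _ measurableSet_Ioc
  have hRHS : (∫⁻ y in Ioc 0 t, (f y) ^ p * (∫⁻ s in Ioc 0 y, b s) ^ (p - 1) * b y)
      = ∫⁻ y in Ioc 0 t, f y ^ p * (μ (Ioc 0 y)) ^ (p - 1) ∂μ := by
    rw [← hconv _ hmeas2 _ measurableSet_Ioc]
    exact lintegral_congr fun y => by rw [hBμ]
  set I := ∫⁻ y in Ioc 0 t, f y ^ p * (μ (Ioc 0 y)) ^ (p - 1) ∂μ with hIdef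
  set S := ∑' k, f (τ k) * c k with hSdef
  have hF : (∫⁻ y in Ioc 0 t, f y ∂μ) ≤ 2 * S := by
    calc ∫⁻ y in Ioc 0 t, f y ∂μ
        ≤ ∫⁻ y in Ioc 0 L ∪ ⋃ k, Ioc (τ (k+1)) (τ k), f y ∂μ := lintegral_mono_set hcover
      _ ≤ (∫⁻ y in Ioc 0 L, f y ∂μ) + ∫⁻ y in ⋃ k, Ioc (τ (k+1)) (τ k), f y ∂μ :=
          lintegral_union_le _ _ _
      _ = ∫⁻ y in ⋃ k, Ioc (τ (k+1)) (τ k), f y ∂μ := by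
          rw [setLIntegral_measure_zero _ _ hLnull, zero_add]
      _ ≤ ∑' k, ∫⁻ y in Ioc (τ (k+1)) (τ k), f y ∂μ := lintegral_iUnion_le _ _
      _ ≤ ∑' k, 2 * (f (τ (k+1)) * c (k+1)) := by
          apply ENNReal.tsum_le_tsum
          intro k
          calc ∫⁻ y in Ioc (τ (k+1)) (τ k), f y ∂μ
              ≤ ∫⁻ _ in Ioc (τ (k+1)) (τ k), f (τ (k+1)) ∂μ := by
                apply setLIntegral_mono measurable_const
                intro x hx
                exact hmono (mem_Ioi.2 (hτpos (k+1))) (mem_Ioi.2 ((hτpos (k+1)).trans hx.1))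
                  hx.1.le
            _ = f (τ (k+1)) * μ (Ioc (τ (k+1)) (τ k)) := setLIntegral_const _ _
            _ = f (τ (k+1)) * c (k+1) := by rw [hμIoc k]
            _ ≤ 2 * (f (τ (k+1)) * c (k+1)) := le_mul_of_one_le_left zero_le one_le_two
      _ = 2 * ∑' k, f (τ (k+1)) * c (k+1) := ENNReal.tsum_mul_left
      _ ≤ 2 * S := by
          apply mul_le_mul_right
          exact ENNReal.tsum_comp_le_tsum_of_injective Nat.succ_injective
            (fun k => f (τ k) * c k)
  have hsubU : (⋃ k, Ioc (τ (k+1)) (τ k)) ⊆ Ioc 0 t := by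
    intro x hx
    obtain ⟨k, hk⟩ := mem_iUnion.1 hx
    exact ⟨(hτpos (k+1)).trans hk.1, hk.2.trans (hτmem k).2⟩
  have hSI : S ^ p ≤ 2 * I := by
    refine le_trans (tsum_rpow_le hp0 hp1 _) ?_
    have h2k : ∀ k, (f (τ k) * c k) ^ p
        ≤ 2 * ∫⁻ y in Ioc (τ (k+1)) (τ k), f y ^ p * (μ (Ioc 0 y)) ^ (p-1) ∂μ := by
      intro k
      have hlow : ∀ y ∈ Ioc (τ (k+1)) (τ k),
          f (τ k) ^ p * (c k) ^ (p-1) ≤ f y ^ p * (μ (Ioc 0 y)) ^ (p-1) := by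
        intro y hy
        have hy0 : (0:ℝ) < y := (hτpos (k+1)).trans hy.1
        have hfy : f (τ k) ≤ f y := hmono (mem_Ioi.2 hy0) (mem_Ioi.2 (hτpos k)) hy.2
        have hBy : μ (Ioc 0 y) ≤ c k := by rw [← hτB k]; exact hBmono hy.2
        exact mul_le_mul' (ENNReal.rpow_le_rpow hfy hp0.le)
          (ennreal_rpow_anti hBy (by linarith))
      have hpow : (c k) ^ (p-1) * c k = (c k) ^ p := by
        nth_rewrite 2 [← ENNReal.rpow_one (c k)]
        rw [← ENNReal.rpow_add _ _ (hc0 k) (hcT k)]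
        norm_num
      calc (f (τ k) * c k) ^ p = f (τ k) ^ p * (c k) ^ p :=
            ENNReal.mul_rpow_of_nonneg _ _ hp0.le
        _ = f (τ k) ^ p * ((c k) ^ (p-1) * c k) := by rw [hpow]
        _ = f (τ k) ^ p * ((c k) ^ (p-1) * (2 * c (k+1))) := by rw [← hck k]
        _ = 2 * (f (τ k) ^ p * (c k) ^ (p-1) * μ (Ioc (τ (k+1)) (τ k))) := by
            rw [hμIoc k]; ring
        _ ≤ 2 * ∫⁻ y in Ioc (τ (k+1)) (τ k), f y ^ p * (μ (Ioc 0 y)) ^ (p-1) ∂μ := by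
            apply mul_le_mul_right
            rw [← setLIntegral_const]
            exact setLIntegral_mono hmeas2 hlow
    calc ∑' k, (f (τ k) * c k) ^ p
        ≤ ∑' k, 2 * ∫⁻ y in Ioc (τ (k+1)) (τ k), f y ^ p * (μ (Ioc 0 y)) ^ (p-1) ∂μ :=
          ENNReal.tsum_le_tsum h2k
      _ = 2 * ∑' k, ∫⁻ y in Ioc (τ (k+1)) (τ k), f y ^ p * (μ (Ioc 0 y)) ^ (p-1) ∂μ :=
          ENNReal.tsum_mul_left
      _ = 2 * ∫⁻ y in ⋃ k, Ioc (τ (k+1)) (τ k), f y ^ p * (μ (Ioc 0 y)) ^ (p-1) ∂μ := by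
          rw [lintegral_iUnion (fun k => measurableSet_Ioc) hdisj]
      _ ≤ 2 * I := by
          apply mul_le_mul_right
          exact lintegral_mono_set hsubU
  rw [hLHS, hRHS]
  have hS1 : S = (S ^ p) ^ (1/p) := by
    rw [← ENNReal.rpow_mul, mul_one_div_cancel hp0.ne', ENNReal.rpow_one]
  calc ∫⁻ y in Ioc 0 t, f y ∂μ ≤ 2 * S := hF
    _ = 2 * (S ^ p) ^ (1/p) := by rw [← hS1]
    _ ≤ 2 * (2 * I) ^ (1/p) := by
        apply mul_le_mul_right
        exact ENNReal.rpow_le_rpow hSI (by positivity)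
    _ = 2 * ((2:ℝ≥0∞) ^ (1/p) * I ^ (1/p)) := by
        rw [ENNReal.mul_rpow_of_nonneg _ _ (by positivity : (0:ℝ) ≤ 1/p)]
    _ = 2 * (2:ℝ≥0∞) ^ (1/p) * I ^ (1/p) := (mul_assoc _ _ _).symm
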